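/- Let p be a C*-seminorm on a commutative unital complex *-algebra A (i.e., p(x x*) = p(x)² for all x). Then p(e) = 1 (assuming p is nontrivial), p(x*) = p(x) for all x, and p is submultiplicative: p(xy) ≤ p(x)p(y). -/

import Mathlib

private lemma sqle_aux {a b : ℝ} (ha : 0 ≤ a) (hb : 0 ≤ b) (h : a ^ 2 ≤ b ^ 2) : a ≤ b := by
  nlinarith

private lemma lim_aux {c K : ℝ} (hc : 0 ≤ c) (hK : 0 ≤ K)
    (h : ∀ n : ℕ, c ^ (2^n) ≤ 2 * K ^ (2^n)) : c ≤ K := by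
  rcases eq_or_lt_of_le hK with hK0 | hKpos
  · have h0 := h 0
    simp at h0
    nlinarith [h 1]
  by_contra hlt
  push_neg at hlt
  set r := c / K with hr_def
  have hr : 1 < r := (one_lt_div hKpos).2 hlt
  obtain ⟨n, hn⟩ := pow_unbounded_of_one_lt (R := ℝ) (1 / (r - 1)) one_lt_two
  have hb : 1 + ((2^n : ℕ) : ℝ) * (r - 1) ≤ r ^ (2^n) := by
    have := one_add_mul_le_pow (a := r - 1) (by linarith) (2^n)
    simpa using this
  have h2 : r ^ (2^n) ≤ 2 := by
    have hKm : (0:ℝ) < K ^ (2^n) := pow_pos hKpos _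
    rw [hr_def, div_pow, div_le_iff₀ hKm]
    linarith [h n]
  have hcast : ((2^n : ℕ) : ℝ) = (2:ℝ)^n := by push_cast; ring
  rw [hcast] at hb
  have hpos : (0:ℝ) < r - 1 := by linarith
  rw [div_lt_iff₀ hpos] at hn
  nlinarith

/-- basic properties of C*-seminorms on a commutative unital complex *-algebra. -/
theorem cstar_seminorm_basic {A : Type*} [CommRing A] [Algebra ℂ A] [StarRing A]
    [StarModule ℂ A] (p : Seminorm ℂ A) (hC : ∀ x : A, p (x * star x) = p x ^ 2) :
    (p ≠ 0 → p 1 = 1) ∧ (∀ x : A, p (star x) = p x) ∧ (∀ x y : A, p (x * y) ≤ p x * p y) := by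
  have hstar : ∀ x : A, p (star x) = p x := by
    intro x
    have h1 := hC (star x)
    rw [star_star, mul_comm, hC x] at h1
    exact le_antisymm (sqle_aux (apply_nonneg p _) (apply_nonneg p _) h1.ge)
      (sqle_aux (apply_nonneg p _) (apply_nonneg p _) h1.le)
  have hsq : ∀ a : A, star a = a → p (a ^ 2) = p a ^ 2 := by
    intro a ha
    have := hC a
    rwa [ha, ← sq] at this
  have hpow : ∀ a : A, star a = a → ∀ n : ℕ, p (a ^ (2^n)) = p a ^ (2^n) := by
    intro a ha n
    induction n with
    | zero => simp
    | succ n ih =>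
      have hsa : star (a ^ (2^n)) = a ^ (2^n) := by rw [star_pow, ha]
      calc p (a ^ (2^(n+1))) = p ((a ^ (2^n)) ^ 2) := by rw [← pow_mul, pow_succ]
        _ = p (a ^ (2^n)) ^ 2 := hsq _ hsa
        _ = (p a ^ (2^n)) ^ 2 := by rw [ih]
        _ = p a ^ (2^(n+1)) := by rw [← pow_mul, pow_succ]
  have crude : ∀ u v : A, star u = u → star v = v →
      p (u * v) ≤ 2 * max (p u) (p v) ^ 2 := by
    intro u v hu hv
    have h4 : (4:ℂ) • (u * v) = (u+v)^2 - (u-v)^2 := by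
      rw [Algebra.smul_def, map_ofNat]
      ring
    have e1 : p ((u+v)^2) = p (u+v) ^ 2 := hsq _ (by rw [star_add, hu, hv])
    have e2 : p ((u-v)^2) = p (u-v) ^ 2 := hsq _ (by rw [star_sub, hu, hv])
    have h5 : 4 * p (u * v) = p ((u+v)^2 - (u-v)^2) := by
      rw [← h4, map_smul_eq_mul]
      norm_num
    have h6 : p ((u+v)^2 - (u-v)^2) ≤ p (u+v) ^ 2 + p (u-v) ^ 2 := by
      calc p ((u+v)^2 - (u-v)^2) ≤ p ((u+v)^2) + p ((u-v)^2) := map_sub_le_add p _ _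
        _ = p (u+v) ^ 2 + p (u-v) ^ 2 := by rw [e1, e2]
    have t1 : p (u+v) ≤ p u + p v := map_add_le_add p u v
    have t2 : p (u-v) ≤ p u + p v := map_sub_le_add p u v
    have hm1 : p u ≤ max (p u) (p v) := le_max_left _ _
    have hm2 : p v ≤ max (p u) (p v) := le_max_right _ _
    nlinarith [apply_nonneg p (u+v), apply_nonneg p (u-v), apply_nonneg p u, apply_nonneg p v]
  have iter : ∀ a b : A, star a = a → star b = b → ∀ n : ℕ,
      p (a * b) ^ (2^n) = p (a ^ (2^n) * b ^ (2^n)) := by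
    intro a b ha hb n
    induction n with
    | zero => simp
    | succ n ih =>
      have hsab : star (a ^ (2^n) * b ^ (2^n)) = a ^ (2^n) * b ^ (2^n) := by
        rw [star_mul, star_pow, star_pow, ha, hb, mul_comm]
      have heq : (a ^ (2^n) * b ^ (2^n)) ^ 2 = a ^ (2^(n+1)) * b ^ (2^(n+1)) := by
        rw [mul_pow, ← pow_mul, ← pow_mul, pow_succ]
      calc p (a*b) ^ (2^(n+1)) = (p (a*b) ^ (2^n)) ^ 2 := by rw [← pow_mul, pow_succ]
        _ = p (a ^ (2^n) * b ^ (2^n)) ^ 2 := by rw [ih]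
        _ = p ((a ^ (2^n) * b ^ (2^n)) ^ 2) := (hsq _ hsab).symm
        _ = p (a ^ (2^(n+1)) * b ^ (2^(n+1))) := by rw [heq]
  have key0 : ∀ a b : A, star a = a → star b = b →
      p (a * b) ≤ max (p a) (p b) ^ 2 := by
    intro a b ha hb
    have hmax : ∀ m : ℕ, max (p a) (p b) ^ m = max (p a ^ m) (p b ^ m) := by
      intro m
      rcases le_total (p a) (p b) with h | h
      · rw [max_eq_right h, max_eq_right (pow_le_pow_left₀ (apply_nonneg p a) h m)]
      · rw [max_eq_left h, max_eq_left (pow_le_pow_left₀ (apply_nonneg p b) h m)]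
    apply lim_aux (apply_nonneg p _) (by positivity)
    intro n
    rw [iter a b ha hb n]
    calc p (a ^ (2^n) * b ^ (2^n))
        ≤ 2 * max (p (a ^ (2^n))) (p (b ^ (2^n))) ^ 2 :=
          crude _ _ (by rw [star_pow, ha]) (by rw [star_pow, hb])
      _ = 2 * (max (p a) (p b) ^ 2) ^ (2^n) := by
          rw [hpow a ha n, hpow b hb n, ← hmax, ← pow_mul, ← pow_mul, mul_comm (2^n) 2]
  have key : ∀ a b : A, star a = a → star b = b → p (a * b) ≤ p a * p b := by
    intro a b ha hb
    have aux : ∀ u : ℝ, 0 < u → p (a * b) ≤ max (u * p a) (u⁻¹ * p b) ^ 2 := by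
      intro u hu
      have hsmul : ((u:ℂ) • a) * (((u:ℂ))⁻¹ • b) = a * b := by
        rw [smul_mul_smul_comm, mul_inv_cancel₀ (by exact_mod_cast hu.ne')]
        simp
      have hsa : star ((u:ℂ) • a) = (u:ℂ) • a := by
        rw [star_smul, ha, RCLike.star_def, Complex.conj_ofReal]
      have hsb : star (((u:ℂ))⁻¹ • b) = ((u:ℂ))⁻¹ • b := by
        rw [star_smul, hb, RCLike.star_def, map_inv₀, Complex.conj_ofReal]
      have h := key0 _ _ hsa hsb
      rw [hsmul, map_smul_eq_mul, map_smul_eq_mul] at h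
      have hnu : ‖(u:ℂ)‖ = u := by
        rw [Complex.norm_real, Real.norm_of_nonneg hu.le]
      have hnu' : ‖((u:ℂ))⁻¹‖ = u⁻¹ := by rw [norm_inv, hnu]
      rwa [hnu, hnu'] at h
    rcases eq_or_lt_of_le (apply_nonneg p a) with hpa | hpa
    · have hle : ∀ ε : ℝ, 0 < ε → p (a * b) ≤ 0 + ε := by
        intro ε hε
        have hb1 : (0:ℝ) < p b + 1 := by nlinarith [apply_nonneg p b]
        have h := aux ((p b + 1) / Real.sqrt ε) (by positivity)
        have hinv : ((p b + 1) / Real.sqrt ε)⁻¹ = Real.sqrt ε / (p b + 1) := inv_div _ _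
        rw [← hpa, mul_zero, hinv] at h
        have hmax0 : max (0:ℝ) (Real.sqrt ε / (p b + 1) * p b)
            = Real.sqrt ε * (p b / (p b + 1)) := by
          rw [max_eq_right (by positivity)]; ring
        rw [hmax0] at h
        have hq0 : 0 ≤ p b / (p b + 1) := div_nonneg (apply_nonneg p b) hb1.le
        have hq1 : p b / (p b + 1) ≤ 1 := by rw [div_le_one hb1]; linarith
        have hq2 : (p b / (p b + 1)) ^ 2 ≤ 1 := by nlinarith
        have hsε : Real.sqrt ε ^ 2 = ε := Real.sq_sqrt hε.le
        calc p (a * b) ≤ (Real.sqrt ε * (p b / (p b + 1))) ^ 2 := h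
          _ = ε * (p b / (p b + 1)) ^ 2 := by rw [mul_pow, hsε]
          _ ≤ ε * 1 := mul_le_mul_of_nonneg_left hq2 hε.le
          _ = 0 + ε := by ring
      have h0 : p (a * b) ≤ 0 := le_of_forall_pos_le_add hle
      rw [← hpa, zero_mul]
      exact h0
    rcases eq_or_lt_of_le (apply_nonneg p b) with hpb | hpb
    · have hle : ∀ ε : ℝ, 0 < ε → p (a * b) ≤ 0 + ε := by
        intro ε hε
        have ha1 : (0:ℝ) < p a + 1 := by linarith
        have h := aux (Real.sqrt ε / (p a + 1)) (by positivity)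
        rw [← hpb, mul_zero] at h
        have hmax0 : max (Real.sqrt ε / (p a + 1) * p a) (0:ℝ)
            = Real.sqrt ε * (p a / (p a + 1)) := by
          rw [max_eq_left (by positivity)]; ring
        rw [hmax0] at h
        have hq0 : 0 ≤ p a / (p a + 1) := div_nonneg (apply_nonneg p a) ha1.le
        have hq1 : p a / (p a + 1) ≤ 1 := by rw [div_le_one ha1]; linarith
        have hq2 : (p a / (p a + 1)) ^ 2 ≤ 1 := by nlinarith
        have hsε : Real.sqrt ε ^ 2 = ε := Real.sq_sqrt hε.le
        calc p (a * b) ≤ (Real.sqrt ε * (p a / (p a + 1))) ^ 2 := h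
          _ = ε * (p a / (p a + 1)) ^ 2 := by rw [mul_pow, hsε]
          _ ≤ ε * 1 := mul_le_mul_of_nonneg_left hq2 hε.le
          _ = 0 + ε := by ring
      have h0 : p (a * b) ≤ 0 := le_of_forall_pos_le_add hle
      rw [← hpb, mul_zero]
      exact h0
    · set u := Real.sqrt (p b / p a) with hu_def
      have hu : (0:ℝ) < u := Real.sqrt_pos.mpr (by positivity)
      have h := aux u hu
      have hsq2 : u ^ 2 = p b / p a := Real.sq_sqrt (by positivity)
      rcases max_choice (u * p a) (u⁻¹ * p b) with hm | hm <;> rw [hm] at h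
      · calc p (a * b) ≤ (u * p a) ^ 2 := h
          _ = u ^ 2 * p a ^ 2 := by ring
          _ = (p b / p a) * p a ^ 2 := by rw [hsq2]
          _ = p a * p b := by field_simp
      · calc p (a * b) ≤ (u⁻¹ * p b) ^ 2 := h
          _ = (u ^ 2)⁻¹ * p b ^ 2 := by rw [← inv_pow]; ring
          _ = (p b / p a)⁻¹ * p b ^ 2 := by rw [hsq2]
          _ = p a * p b := by
              rw [inv_div]
              field_simp
  have hsub : ∀ x y : A, p (x * y) ≤ p x * p y := by
    intro x y
    have h1 : p (x * y) ^ 2 = p ((x * star x) * (y * star y)) := by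
      rw [← hC (x * y)]
      congr 1
      rw [star_mul]
      ring
    have h2 : p ((x * star x) * (y * star y)) ≤ p (x * star x) * p (y * star y) := by
      apply key
      · rw [star_mul, star_star, mul_comm]
      · rw [star_mul, star_star, mul_comm]
    rw [hC x, hC y] at h2
    have h3 : p (x * y) ^ 2 ≤ (p x * p y) ^ 2 := by
      rw [h1]
      calc p ((x * star x) * (y * star y)) ≤ p x ^ 2 * p y ^ 2 := h2
        _ = (p x * p y) ^ 2 := by ring
    exact sqle_aux (apply_nonneg p _)
      (mul_nonneg (apply_nonneg p x) (apply_nonneg p y)) h3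
  refine ⟨?_, hstar, hsub⟩
  intro hp
  have h1 : p 1 = p 1 ^ 2 := by
    have := hC 1
    rwa [star_one, one_mul] at this
  obtain ⟨x, hx⟩ : ∃ x : A, p x ≠ 0 := by
    by_contra h
    push_neg at h
    exact hp (by ext x; simp [h x])
  have hx' : 0 < p x := lt_of_le_of_ne (apply_nonneg p x) (Ne.symm hx)
  have h2 : p x ≤ p x * p 1 := by
    have := hsub x 1
    rwa [mul_one] at this
  have h3 : 1 ≤ p 1 := by
    by_contra h
    push_neg at h
    nlinarith
  nlinarith
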